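/- Let a ≥ 3 be an integer and let h_{a,1} be as defined. Then h_{a,1}(0) = a, and for all positive integers n, h_{a,1}(n) = ⌊n/2⌋ · a + 1. -/

import Mathlib

/-- For `a ≥ 3` and the sequence `h = h_{a,1}` we have `h 0 = a` and
`h n = ⌊n/2⌋·a + 1` for every positive integer `n`. -/
theorem stmt16 (a : ℕ) (ha : 3 ≤ a) (h : ℤ → ℕ)
    (hneg : ∀ n : ℤ, n ≤ 0 → h n = a) (hone : h 1 = 1)
    (hrec : ∀ n : ℤ, 2 ≤ n → h n = h (n - (h (n - 1) : ℤ)) + h (n - 2)) :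
    h 0 = a ∧ ∀ n : ℕ, 1 ≤ n → h n = n / 2 * a + 1 := by
  refine ⟨hneg 0 le_rfl, ?_⟩
  intro n
  induction n using Nat.strong_induction_on with
  | _ n ih =>
    intro hn
    match n, hn with
    | 1, _ => simpa using hone
    | 2, _ =>
      have h2 := hrec 2 (by norm_num)
      norm_num [hone] at h2
      have h0 : h 0 = a := hneg 0 le_rfl
      rw [h0] at h2
      have e : ((2:ℕ):ℤ) = 2 := by norm_num
      rw [e, h2]; omega
    | (k+3), _ =>
      have ih1 : h ((k+1 : ℕ) : ℤ) = (k+1)/2*a + 1 := ih (k+1) (by omega) (by omega)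
      have ih2 : h ((k+2 : ℕ) : ℤ) = (k+2)/2*a + 1 := ih (k+2) (by omega) (by omega)
      have e1 : ((k+3 : ℕ) : ℤ) - 1 = ((k+2 : ℕ) : ℤ) := by push_cast; ring
      have e2 : ((k+3 : ℕ) : ℤ) - 2 = ((k+1 : ℕ) : ℤ) := by push_cast; ring
      have hr3 := hrec ((k+3 : ℕ) : ℤ) (by push_cast; omega)
      rw [e1, e2, ih2] at hr3
      -- show the first argument is ≤ 0
      have hq1 : 1 ≤ (k+2)/2 := by omega
      have hm : 3*((k+2)/2) ≤ a*((k+2)/2) := Nat.mul_le_mul_right _ ha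
      have hp : k+2 ≤ (k+2)/2 * a := by
        have h3 : k+2 ≤ 3*((k+2)/2) := by omega
        calc k+2 ≤ 3*((k+2)/2) := h3
          _ ≤ a*((k+2)/2) := hm
          _ = (k+2)/2 * a := Nat.mul_comm _ _
      have hle : (k+3 : ℕ) ≤ (k+2)/2*a + 1 := by linarith
      have hleZ : ((k+3 : ℕ) : ℤ) - (((k+2)/2*a + 1 : ℕ) : ℤ) ≤ 0 := by
        have : ((k+3 : ℕ) : ℤ) ≤ (((k+2)/2*a + 1 : ℕ) : ℤ) := by exact_mod_cast hle
        linarith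
      rw [hneg _ hleZ, ih1] at hr3
      rw [hr3]
      have hq : (k+3)/2 = (k+1)/2 + 1 := by omega
      rw [hq]; ring
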